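/- For the map W(x,y) = (x(1-b+dy), y(1-a+c-(c+d)x-cy)) with c > 0, c ≥ a, a ≠ c, the fixed point (0, (c-a)/c) is attracting if b > d(1-a/c) and a saddle if b < d(1-a/c). -/

import Mathlib

open Filter Topology

noncomputable def V (a b c d : ℝ) (p : ℝ × ℝ × ℝ) : ℝ × ℝ × ℝ :=
  (p.1 * (1 - b + d * p.2.1),
   p.2.1 * (1 - a - d * p.1 + c * p.2.2),
   p.2.2 * (1 - c * p.2.1) + a * p.2.1 + b * p.1)

def S2 : Set (ℝ × ℝ × ℝ) :=
  {p | 0 ≤ p.1 ∧ 0 ≤ p.2.1 ∧ 0 ≤ p.2.2 ∧ p.1 + p.2.1 + p.2.2 = 1}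
theorem stmt15 (a b c d : ℝ) (ha0 : 0 ≤ a) (ha1 : a ≤ 1) (hb0 : 0 ≤ b) (hb1 : b ≤ 1)
    (hac : a < c) (hc : c ≤ 1 + a) (hd1 : -(1 - b) ≤ d) (hd2 : d ≤ 1 - a) :
    (d * (1 - a / c) < b →
      |1 - b + (c - a) * d / c| < 1 ∧ |1 + a - c| < 1) ∧
    (b < d * (1 - a / c) →
      1 < |1 - b + (c - a) * d / c| ∧ |1 + a - c| < 1) := by
  have hc0 : 0 < c := lt_of_le_of_lt ha0 hac
  have key : (c - a) * d / c = d * (1 - a / c) := by field_simp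
  have hfrac0 : 0 ≤ 1 - a / c := by
    have : a / c ≤ 1 := (div_le_one hc0).mpr hac.le
    linarith
  have hfrac1 : 1 - a / c ≤ 1 := by
    have : 0 ≤ a / c := div_nonneg ha0 hc0.le
    linarith
  have hsaddle : |1 + a - c| < 1 := by
    rw [abs_lt]; constructor <;> linarith
  have hlow : -(1 - b) ≤ d * (1 - a / c) := by
    rcases le_or_gt 0 d with h | h
    · nlinarith
    · nlinarith
  constructor
  · intro h
    refine ⟨?_, hsaddle⟩
    rw [key, abs_lt]
    constructor <;> linarith
  · intro h
    refine ⟨?_, hsaddle⟩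
    rw [key]
    calc 1 < 1 - b + d * (1 - a / c) := by linarith
    _ ≤ |1 - b + d * (1 - a / c)| := le_abs_self _
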